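/- Let ξ be a random variable, x, x' ∈ ℝ^d fixed, g ∈ ℝ^d fixed, p ∈ [0,1], and define g' = ∇f_ξ(x') + (1−p)(g − ∇f_ξ(x)). Assume E[∇f_ξ(z)] = ∇f(z) for every z, E‖∇f_ξ(z) − ∇f(z)‖² ≤ σ² for every z, and ‖∇f_ξ(u) − ∇f(u) − ∇f_ξ(v) + ∇f(v)‖ ≤ δ‖u − v‖ almost surely. Then E‖g' − ∇f(x')‖² ≤ (1−p)²‖g − ∇f(x)‖² + 2(1−p)²δ²‖x' − x‖² + 2p²σ². -/

import Mathlib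

open MeasureTheory

set_option maxHeartbeats 1000000 in
theorem mvr_estimator_variance_bound {d : ℕ}
    {Ω : Type*} [MeasurableSpace Ω] (P : Measure Ω) [IsProbabilityMeasure P]
    (f : EuclideanSpace ℝ (Fin d) → ℝ)
    (fξ : Ω → EuclideanSpace ℝ (Fin d) → ℝ)
    (hf : Differentiable ℝ f) (hfξ : ∀ ω, Differentiable ℝ (fξ ω))
    (σ δ p : ℝ) (hσ : 0 ≤ σ) (hδ : 0 ≤ δ) (hp : p ∈ Set.Icc (0 : ℝ) 1)
    (x x' g : EuclideanSpace ℝ (Fin d))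
    (hunbiased : ∀ z, (∫ ω, gradient (fξ ω) z ∂P) = gradient f z)
    (hintz : ∀ z, Integrable (fun ω => gradient (fξ ω) z) P)
    (hvar : ∀ z, (∫ ω, ‖gradient (fξ ω) z - gradient f z‖ ^ 2 ∂P) ≤ σ ^ 2)
    (hvarint : ∀ z, Integrable (fun ω => ‖gradient (fξ ω) z - gradient f z‖ ^ 2) P)
    (hsim : ∀ᵐ ω ∂P, ∀ u v : EuclideanSpace ℝ (Fin d),
      ‖gradient (fξ ω) u - gradient f u - gradient (fξ ω) v + gradient f v‖ ≤ δ * ‖u - v‖)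
    (hint : Integrable (fun ω =>
      ‖(gradient (fξ ω) x' + (1 - p) • (g - gradient (fξ ω) x)) - gradient f x'‖ ^ 2) P) :
    (∫ ω, ‖(gradient (fξ ω) x' + (1 - p) • (g - gradient (fξ ω) x)) - gradient f x'‖ ^ 2 ∂P)
      ≤ (1 - p) ^ 2 * ‖g - gradient f x‖ ^ 2
        + 2 * (1 - p) ^ 2 * δ ^ 2 * ‖x' - x‖ ^ 2 + 2 * p ^ 2 * σ ^ 2 := by
  obtain ⟨hp0, hp1⟩ := hp
  have h1p : (0:ℝ) ≤ 1 - p := by linarith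
  set D' : Ω → EuclideanSpace ℝ (Fin d) := fun ω => gradient (fξ ω) x' - gradient f x'
    with hD'
  set D : Ω → EuclideanSpace ℝ (Fin d) := fun ω => gradient (fξ ω) x - gradient f x
    with hD
  set b : EuclideanSpace ℝ (Fin d) := (1 - p) • (g - gradient f x) with hbdef
  set A : Ω → EuclideanSpace ℝ (Fin d) := fun ω => D' ω - (1 - p) • D ω with hAdef
  have hrw : ∀ ω, (gradient (fξ ω) x' + (1 - p) • (g - gradient (fξ ω) x)) - gradient f x'
      = A ω + b := by
    intro ω
    simp only [hAdef, hD', hD, hbdef]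
    module
  have hD'int : Integrable D' P := (hintz x').sub (integrable_const _)
  have hDint : Integrable D P := (hintz x).sub (integrable_const _)
  have hAint : Integrable A P := hD'int.sub (by exact hDint.smul (1 - p))
  have hD'zero : (∫ ω, D' ω ∂P) = 0 := by
    rw [hD', integral_sub (hintz x') (integrable_const _), hunbiased, integral_const]
    simp
  have hDzero : (∫ ω, D ω ∂P) = 0 := by
    rw [hD, integral_sub (hintz x) (integrable_const _), hunbiased, integral_const]
    simp
  have hsm : Integrable (fun ω => (1 - p) • D ω) P := by exact hDint.smul (1 - p)
  have hAzero : (∫ ω, A ω ∂P) = 0 := by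
    rw [hAdef, integral_sub hD'int hsm, integral_smul, hD'zero, hDzero]
    simp
  -- pointwise a.e. bound on ‖A‖²
  have hptle : ∀ᵐ ω ∂P, ‖A ω‖^2 ≤ 2*(1-p)^2*(δ*‖x'-x‖)^2 + 2*p^2*‖D' ω‖^2 := by
    filter_upwards [hsim] with ω hω
    have h1 : A ω = (1-p) • (D' ω - D ω) + p • D' ω := by
      simp only [hAdef, hD', hD]; module
    have h2 : ‖D' ω - D ω‖ ≤ δ * ‖x' - x‖ := by
      have heq : D' ω - D ω
          = gradient (fξ ω) x' - gradient f x' - gradient (fξ ω) x + gradient f x := by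
        simp only [hD', hD]; abel
      rw [heq]; exact hω x' x
    have h3 : ‖A ω‖ ≤ (1-p)*‖D' ω - D ω‖ + p*‖D' ω‖ := by
      rw [h1]
      calc ‖(1-p) • (D' ω - D ω) + p • D' ω‖
          ≤ ‖(1-p) • (D' ω - D ω)‖ + ‖p • D' ω‖ := norm_add_le _ _
        _ = (1-p)*‖D' ω - D ω‖ + p*‖D' ω‖ := by
            rw [norm_smul, norm_smul, Real.norm_of_nonneg h1p, Real.norm_of_nonneg hp0]
    have hnn0 : (0:ℝ) ≤ ‖D' ω - D ω‖ := norm_nonneg _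
    nlinarith [norm_nonneg (A ω), norm_nonneg (D' ω),
      sq_nonneg ((1-p)*‖D' ω - D ω‖ - p*‖D' ω‖),
      mul_nonneg h1p hnn0, mul_nonneg hp0 (norm_nonneg (D' ω)),
      mul_le_mul h2 h2 hnn0 (le_trans hnn0 h2)]
  have hbound : Integrable (fun ω => 2*(1-p)^2*(δ*‖x'-x‖)^2 + 2*p^2*‖D' ω‖^2) P :=
    (integrable_const _).add ((hvarint x').const_mul _)
  have hA2int : Integrable (fun ω => ‖A ω‖^2) P := by
    have hm : AEStronglyMeasurable (fun ω => ‖A ω‖^2) P := by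
      have h := hAint.aestronglyMeasurable.norm
      simpa [sq, Pi.mul_def] using h.mul h
    refine hbound.mono' hm ?_
    filter_upwards [hptle] with ω hω
    rw [Real.norm_of_nonneg (sq_nonneg _)]
    exact hω
  have hA2le : (∫ ω, ‖A ω‖^2 ∂P) ≤ 2*(1-p)^2*δ^2*‖x'-x‖^2 + 2*p^2*σ^2 := by
    have h1 := integral_mono_ae hA2int hbound hptle
    rw [integral_add (integrable_const _) ((hvarint x').const_mul _), integral_const,
      integral_const_mul] at h1
    simp only [probReal_univ, one_smul] at h1
    have h2 : (∫ ω, ‖gradient (fξ ω) x' - gradient f x'‖^2 ∂P) ≤ σ^2 := hvar x'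
    nlinarith [h1, mul_le_mul_of_nonneg_left h2 (by positivity : (0:ℝ) ≤ 2*p^2)]
  have hexp : (∫ ω, ‖(gradient (fξ ω) x' + (1 - p) • (g - gradient (fξ ω) x))
      - gradient f x'‖ ^ 2 ∂P) = (∫ ω, ‖A ω‖^2 ∂P) + ‖b‖^2 := by
    have hpt : ∀ ω, ‖(gradient (fξ ω) x' + (1 - p) • (g - gradient (fξ ω) x))
        - gradient f x'‖ ^ 2 = ‖A ω‖^2 + (2 * (inner ℝ (A ω) b : ℝ) + ‖b‖^2) := by
      intro ω
      rw [hrw ω, @norm_add_sq_real]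
      ring
    have hinnerint : Integrable (fun ω => (inner ℝ (A ω) b : ℝ)) P := hAint.inner_const b
    have hinner : (∫ ω, (inner ℝ (A ω) b : ℝ) ∂P) = 0 := by
      simp_rw [real_inner_comm]
      rw [integral_inner hAint b, hAzero, inner_zero_right]
    have hi1 : Integrable (fun ω => 2 * (inner ℝ (A ω) b : ℝ)) P := hinnerint.const_mul 2
    have hi2 : Integrable (fun ω => 2 * (inner ℝ (A ω) b : ℝ) + ‖b‖^2) P :=
      hi1.add (integrable_const _)
    simp_rw [hpt]
    rw [integral_add hA2int hi2, integral_add hi1 (integrable_const _),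
      integral_const_mul, hinner, integral_const]
    simp
  rw [hexp]
  have hbnorm : ‖b‖^2 = (1-p)^2 * ‖g - gradient f x‖^2 := by
    rw [hbdef, norm_smul, Real.norm_of_nonneg h1p, mul_pow]
  linarith [hA2le]
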